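/- Let j ≥ 2, let S ⊆ ℝ^{j−1} be a connected set, and let f, g : ℝ^{j−1} → ℝ be functions that are continuous on S and satisfy f(r) < g(r) for all r ∈ S. Then the set {(r,t) ∈ ℝ^{j−1} × ℝ : r ∈ S and f(r) < t < g(r)} is a connected subset of ℝ^j. -/

import Mathlib

/-- Let `j ≥ 2`, let `S ⊆ ℝ^{j-1}` be a connected set, and let
`f, g : ℝ^{j-1} → ℝ` be continuous on `S` with `f(r) < g(r)` for all `r ∈ S`. Then
`{(r,t) : r ∈ S and f(r) < t < g(r)}` is a connected subset of `ℝ^j = ℝ^{j-1} × ℝ`. -/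
theorem stmt_7 (j : ℕ) (hj : 2 ≤ j)
    (S : Set (Fin (j - 1) → ℝ)) (hS : IsConnected S)
    (f g : (Fin (j - 1) → ℝ) → ℝ)
    (hf : ContinuousOn f S) (hg : ContinuousOn g S)
    (hfg : ∀ r ∈ S, f r < g r) :
    IsConnected {x : (Fin (j - 1) → ℝ) × ℝ | x.1 ∈ S ∧ f x.1 < x.2 ∧ x.2 < g x.1} := by
  set h : (Fin (j - 1) → ℝ) → ℝ := fun r => (f r + g r) / 2 with hh
  have hhc : ContinuousOn (fun r => (r, h r)) S :=
    ContinuousOn.prodMk continuousOn_id ((hf.add hg).div_const 2)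
  have hlt : ∀ r ∈ S, f r < h r ∧ h r < g r := by
    intro r hr
    constructor <;> simp only [hh] <;> linarith [hfg r hr]
  set Γ : Set ((Fin (j - 1) → ℝ) × ℝ) := (fun r => (r, h r)) '' S with hΓ
  have hΓconn : IsConnected Γ := hS.image _ hhc
  have hΓsub : Γ ⊆ {x : (Fin (j - 1) → ℝ) × ℝ | x.1 ∈ S ∧ f x.1 < x.2 ∧ x.2 < g x.1} := by
    rintro _ ⟨r, hr, rfl⟩
    exact ⟨hr, (hlt r hr).1, (hlt r hr).2⟩
  obtain ⟨r₀, hr₀⟩ := hS.nonempty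
  refine ⟨⟨(r₀, h r₀), hΓsub ⟨r₀, hr₀, rfl⟩⟩, ?_⟩
  apply isPreconnected_of_forall ((r₀, h r₀) : (Fin (j - 1) → ℝ) × ℝ)
  rintro ⟨r, t⟩ ⟨hr, hft, htg⟩
  refine ⟨Γ ∪ ({r} ×ˢ Set.Ioo (f r) (g r)), ?_, Or.inl ⟨r₀, hr₀, rfl⟩,
    Or.inr ⟨rfl, hft, htg⟩, ?_⟩
  · rintro x (hx | ⟨hx1, hx2⟩)
    · exact hΓsub hx
    · simp only [Set.mem_singleton_iff] at hx1
      exact ⟨hx1 ▸ hr, hx1 ▸ hx2.1, hx1 ▸ hx2.2⟩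
  · apply IsConnected.isPreconnected
    refine IsConnected.union ⟨(r, h r), Set.mem_image_of_mem _ hr,
      Set.mk_mem_prod rfl ⟨(hlt r hr).1, (hlt r hr).2⟩⟩ hΓconn ?_
    exact isConnected_singleton.prod ⟨⟨h r, (hlt r hr).1, (hlt r hr).2⟩,
      isPreconnected_Ioo⟩
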